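/- In the quantum enveloping algebra of type Aₙ (p₁₁ ≠ −1), for 1 ≤ k ≤ m < n the relation u_{km} u_{k,m+1} ≡_{k+1} γ u_{k,m+1} u_{km} holds for some nonzero scalar γ, where u_{km} = x_k ⋯ x_m. -/

import Mathlib

private def Sset (n : ℕ) {A : Type*} [Ring A] (x : ℕ → A) (K : ℕ) : Set A :=
  {a : A | ∃ j, K + 1 ≤ j ∧ j ≤ n ∧
    ∃ l : List ℕ, (∀ t ∈ l, 1 ≤ t ∧ t ≤ n) ∧ a = x j * (l.map x).prod}

section Aux

variable {k : Type*} [Field k] {A : Type*} [Ring A] [Algebra k A]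

/-- Moving `x K` to the left through a product of letters that all commute
with it (indices `> K+1`). -/
private lemma move_lemma (n : ℕ) (x : ℕ → A) (p : ℕ → ℕ → kˣ)
    (hcomm : ∀ i j, 1 ≤ j → j + 1 < i → i ≤ n →
      x i * x j = ((p i j : kˣ) : k) • (x j * x i))
    (K : ℕ) (hK : 1 ≤ K) :
    ∀ l : List ℕ, (∀ t ∈ l, K + 1 < t ∧ t ≤ n) →
      ∃ c : k, c ≠ 0 ∧ (l.map x).prod * x K = c • (x K * (l.map x).prod) := by
  intro l
  induction l with
  | nil => intro _; exact ⟨1, one_ne_zero, by simp⟩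
  | cons t l ih =>
    intro h
    obtain ⟨c, hc, hcl⟩ := ih (fun t ht => h t (List.mem_cons_of_mem _ ht))
    have ht := h t List.mem_cons_self
    have hc2 := hcomm t K hK ht.1 ht.2
    refine ⟨c * ((p t K : kˣ) : k), mul_ne_zero hc (Units.ne_zero _), ?_⟩
    simp only [List.map_cons, List.prod_cons]
    calc (x t * (l.map x).prod) * x K
        = x t * ((l.map x).prod * x K) := by rw [mul_assoc]
      _ = x t * (c • (x K * (l.map x).prod)) := by rw [hcl]
      _ = c • ((x t * x K) * (l.map x).prod) := by
          rw [mul_smul_comm, mul_assoc]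
      _ = c • (((((p t K : kˣ) : k)) • (x K * x t)) * (l.map x).prod) := by rw [hc2]
      _ = (c * ((p t K : kˣ) : k)) • (x K * (x t * (l.map x).prod)) := by
          rw [smul_mul_assoc, smul_smul, mul_assoc]

/-- Left multiplication by `x K` preserves the span of words starting with a
letter of index `≥ K + 2`. -/
private lemma leftK (n : ℕ) (x : ℕ → A) (p : ℕ → ℕ → kˣ)
    (hcomm : ∀ i j, 1 ≤ j → j + 1 < i → i ≤ n →
      x i * x j = ((p i j : kˣ) : k) • (x j * x i))
    (K : ℕ) (hK : 1 ≤ K) (hKn : K ≤ n) :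
    ∀ a ∈ Submodule.span k (Sset n x (K+1)), x K * a ∈ Submodule.span k (Sset n x (K+1)) := by
  intro a ha
  induction ha using Submodule.span_induction with
  | mem a h =>
    obtain ⟨j, hj1, hj2, l, hl, rfl⟩ := h
    have hcj := hcomm j K hK (by omega) hj2
    have hrev : x K * x j = (((p j K : kˣ) : k))⁻¹ • (x j * x K) := by
      rw [hcj, smul_smul, inv_mul_cancel₀ (Units.ne_zero _), one_smul]
    have heq : x K * (x j * (l.map x).prod)
        = (((p j K : kˣ) : k))⁻¹ • (x j * (((K :: l).map x).prod)) := by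
      simp only [List.map_cons, List.prod_cons]
      rw [← mul_assoc, hrev, smul_mul_assoc, mul_assoc]
    rw [heq]
    refine Submodule.smul_mem _ _ (Submodule.subset_span ?_)
    exact ⟨j, hj1, hj2, K :: l, by
      intro t ht
      rcases List.mem_cons.mp ht with h' | h'
      · exact h' ▸ ⟨hK, hKn⟩
      · exact hl t h', rfl⟩
  | zero => rw [mul_zero]; exact zero_mem _
  | add a b _ _ iha ihb => rw [mul_add]; exact add_mem iha ihb
  | smul c a _ ih => rw [mul_smul_comm]; exact Submodule.smul_mem _ _ ih

private lemma Sset_mono (n : ℕ) (x : ℕ → A) (K : ℕ) :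
    Submodule.span k (Sset n x (K+1)) ≤ Submodule.span k (Sset n x K) := by
  refine Submodule.span_mono ?_
  rintro a ⟨j, hj1, hj2, l, hl, he⟩
  exact ⟨j, by omega, hj2, l, hl, he⟩

/-- The key rewriting step: `(x_K u_{K+1,b}) (x_K w') ≡ α x_K² u_{K+1,b} w'`
modulo words starting with `x_{K+1}`. -/
private lemma key (n : ℕ) (x : ℕ → A) (p : ℕ → ℕ → kˣ)
    (hne : ((p 1 1 : kˣ) : k) ≠ -1)
    (hdiag : ∀ i, 1 ≤ i → i ≤ n → p i i = p 1 1)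
    (hcomm : ∀ i j, 1 ≤ j → j + 1 < i → i ≤ n →
      x i * x j = ((p i j : kˣ) : k) • (x j * x i))
    (hserre2 : ∀ i, 1 ≤ i → i + 1 ≤ n →
      x i ^ 2 * x (i + 1) =
        (((p i (i + 1) : kˣ) : k) * (1 + ((p i i : kˣ) : k))) •
            (x i * x (i + 1) * x i)
          - (((p i (i + 1) : kˣ) : k) ^ 2 * ((p i i : kˣ) : k)) •
            (x (i + 1) * x i ^ 2))
    (K : ℕ) (hK : 1 ≤ K) (hKn : K + 1 ≤ n)
    (b : ℕ) (hb1 : K ≤ b) (hbn : b ≤ n)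
    (l' : List ℕ) (hl' : ∀ t ∈ l', 1 ≤ t ∧ t ≤ n) :
    ∃ α : k, α ≠ 0 ∧ ∃ s ∈ Submodule.span k (Sset n x K),
      (x K * ((List.range' (K+1) (b - K)).map x).prod) * (x K * (l'.map x).prod)
        = α • (x K ^ 2 *
            (((List.range' (K+1) (b - K)).map x).prod * (l'.map x).prod)) + s := by
  rcases eq_or_lt_of_le hb1 with rfl | hb
  · -- trivial case `b = K` : the first product is empty
    refine ⟨1, one_ne_zero, 0, zero_mem _, ?_⟩
    simp [Nat.sub_self, sq, mul_assoc]
  -- now `K < b`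
  set w' := (l'.map x).prod with hw'
  set w2 := ((List.range' (K+2) (b - K - 1)).map x).prod with hw2
  have hsplit : ((List.range' (K+1) (b - K)).map x).prod = x (K+1) * w2 := by
    have h1 : b - K = (b - K - 1) + 1 := by omega
    rw [h1, List.range'_succ]
    simp [hw2]
  obtain ⟨c, hc, hmove⟩ := move_lemma n x p hcomm K hK (List.range' (K+2) (b - K - 1))
    (by intro t ht; rw [List.mem_range'_1] at ht; constructor <;> omega)
  set q := ((p K (K+1) : kˣ) : k) with hq
  set pk := ((p K K : kˣ) : k) with hpkdef
  have hpk : pk = ((p 1 1 : kˣ) : k) := by rw [hpkdef, hdiag K hK (by omega)]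
  set γ₀ := q * (1 + pk) with hγ₀def
  have hγ₀ : γ₀ ≠ 0 := by
    refine mul_ne_zero (Units.ne_zero _) (fun h => hne ?_)
    rw [← hpk]
    simpa using eq_neg_of_add_eq_zero_right h
  set δ := q ^ 2 * pk with hδdef
  have hs := hserre2 K hK hKn
  have hserre' : x K * x (K+1) * x K
      = γ₀⁻¹ • (x K ^ 2 * x (K+1)) + (γ₀⁻¹ * δ) • (x (K+1) * x K ^ 2) := by
    have h2 : γ₀ • (x K * x (K+1) * x K)
        = x K ^ 2 * x (K+1) + δ • (x (K+1) * x K ^ 2) := by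
      rw [hs]; abel
    calc x K * x (K+1) * x K
        = γ₀⁻¹ • (γ₀ • (x K * x (K+1) * x K)) := by
          rw [smul_smul, inv_mul_cancel₀ hγ₀, one_smul]
      _ = _ := by rw [h2, smul_add, smul_smul]
  refine ⟨c * γ₀⁻¹, mul_ne_zero hc (inv_ne_zero hγ₀),
    (c * γ₀⁻¹ * δ) • (x (K+1) * (x K ^ 2 * (w2 * w'))), ?_, ?_⟩
  · refine Submodule.smul_mem _ _ (Submodule.subset_span ?_)
    refine ⟨K + 1, le_refl _, hKn,
      K :: K :: (List.range' (K+2) (b - K - 1) ++ l'), ?_, ?_⟩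
    · intro t ht
      simp only [List.mem_cons, List.mem_append, List.mem_range'_1] at ht
      rcases ht with rfl | rfl | h' | h'
      · exact ⟨hK, by omega⟩
      · exact ⟨hK, by omega⟩
      · constructor <;> omega
      · exact hl' t h'
    · simp only [List.map_cons, List.prod_cons, List.map_append, List.prod_append]
      simp [← hw2, ← hw', sq, mul_assoc]
  · rw [hsplit]
    calc (x K * (x (K+1) * w2)) * (x K * w')
        = (x K * x (K+1)) * ((w2 * x K) * w') := by
          rw [mul_assoc, mul_assoc, mul_assoc, mul_assoc]
      _ = (x K * x (K+1)) * ((c • (x K * w2)) * w') := by rw [hmove]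
      _ = c • ((x K * x (K+1) * x K) * (w2 * w')) := by
          rw [smul_mul_assoc, mul_smul_comm]
          simp only [mul_assoc]
      _ = c • ((γ₀⁻¹ • (x K ^ 2 * x (K+1)) + (γ₀⁻¹ * δ) • (x (K+1) * x K ^ 2))
            * (w2 * w')) := by rw [hserre']
      _ = (c * γ₀⁻¹) • (x K ^ 2 * ((x (K+1) * w2) * w'))
            + (c * γ₀⁻¹ * δ) • (x (K+1) * (x K ^ 2 * (w2 * w'))) := by
          rw [add_mul, smul_mul_assoc, smul_mul_assoc, smul_add, smul_smul, smul_smul,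
            mul_assoc (x K ^ 2), mul_assoc, mul_assoc, mul_assoc]

/-- Main auxiliary result, proved by induction on `m - K`. -/
private theorem aux (n : ℕ) (x : ℕ → A) (p : ℕ → ℕ → kˣ)
    (hne : ((p 1 1 : kˣ) : k) ≠ -1)
    (hdiag : ∀ i, 1 ≤ i → i ≤ n → p i i = p 1 1)
    (hcomm : ∀ i j, 1 ≤ j → j + 1 < i → i ≤ n →
      x i * x j = ((p i j : kˣ) : k) • (x j * x i))
    (hserre2 : ∀ i, 1 ≤ i → i + 1 ≤ n →
      x i ^ 2 * x (i + 1) =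
        (((p i (i + 1) : kˣ) : k) * (1 + ((p i i : kˣ) : k))) •
            (x i * x (i + 1) * x i)
          - (((p i (i + 1) : kˣ) : k) ^ 2 * ((p i i : kˣ) : k)) •
            (x (i + 1) * x i ^ 2))
    (K m : ℕ) (hK : 1 ≤ K) (hKm : K ≤ m) (hm : m < n) :
    ∃ γ : k, γ ≠ 0 ∧
      ((List.range' K (m + 1 - K)).map x).prod *
          ((List.range' K (m + 2 - K)).map x).prod
        - γ • (((List.range' K (m + 2 - K)).map x).prod *
            ((List.range' K (m + 1 - K)).map x).prod) ∈
        Submodule.span k (Sset n x K) := by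
  set W := ((List.range' (K+1) (m - K)).map x).prod with hW
  set W' := ((List.range' (K+1) (m + 1 - K)).map x).prod with hW'
  have hu : ((List.range' K (m + 1 - K)).map x).prod = x K * W := by
    have h1 : m + 1 - K = (m - K) + 1 := by omega
    rw [h1, List.range'_succ]
    simp [hW]
  have hv : ((List.range' K (m + 2 - K)).map x).prod = x K * W' := by
    have h2 : m + 2 - K = (m + 1 - K) + 1 := by omega
    rw [h2, List.range'_succ]
    simp [hW']
  obtain ⟨α, hα, s₁, hs₁, eq1⟩ := key n x p hne hdiag hcomm hserre2 K hK (by omega)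
    m hKm (by omega) (List.range' (K+1) (m + 1 - K))
    (by intro t ht; rw [List.mem_range'_1] at ht; constructor <;> omega)
  obtain ⟨β, hβ, s₂, hs₂, eq2⟩ := key n x p hne hdiag hcomm hserre2 K hK (by omega)
    (m + 1) (by omega) (by omega) (List.range' (K+1) (m - K))
    (by intro t ht; rw [List.mem_range'_1] at ht; constructor <;> omega)
  rw [← hW, ← hW'] at eq1 eq2
  obtain ⟨γ', hγ', hD⟩ : ∃ γ' : k, γ' ≠ 0 ∧
      W * W' - γ' • (W' * W) ∈ Submodule.span k (Sset n x (K+1)) := by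
    rcases eq_or_lt_of_le hKm with rfl | hlt
    · refine ⟨1, one_ne_zero, ?_⟩
      have hW1 : W = 1 := by rw [hW, Nat.sub_self]; simp
      rw [hW1, one_mul, mul_one, one_smul, sub_self]
      exact zero_mem _
    · obtain ⟨γ', h1', h2'⟩ := aux n x p hne hdiag hcomm hserre2 (K+1) m
        (by omega) hlt hm
      refine ⟨γ', h1', ?_⟩
      have e1 : m + 1 - (K + 1) = m - K := by omega
      have e2 : m + 2 - (K + 1) = m + 1 - K := by omega
      rw [e1, e2] at h2'
      exact h2'
  refine ⟨α * γ' * β⁻¹,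
    mul_ne_zero (mul_ne_zero hα hγ') (inv_ne_zero hβ), ?_⟩
  set γ := α * γ' * β⁻¹ with hγdef
  have hγβ : γ * β = α * γ' := by
    rw [hγdef, mul_assoc, inv_mul_cancel₀ hβ, mul_one]
  rw [hu, hv, eq1, eq2]
  set D := W * W' - γ' • (W' * W) with hDdef
  have hXD : x K ^ 2 * (W * W') = γ' • (x K ^ 2 * (W' * W)) + x K ^ 2 * D := by
    rw [hDdef, mul_sub, mul_smul_comm]; abel
  have hmemD : x K ^ 2 * D ∈ Submodule.span k (Sset n x K) := by
    have t1 := leftK n x p hcomm K hK (by omega) _ hD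
    have t2 := leftK n x p hcomm K hK (by omega) _ t1
    have hsq : x K ^ 2 * D = x K * (x K * D) := by rw [sq, mul_assoc]
    rw [hsq]
    exact Sset_mono n x K t2
  have hfinal : α • (x K ^ 2 * (W * W')) + s₁ - γ • (β • (x K ^ 2 * (W' * W)) + s₂)
      = α • (x K ^ 2 * D) + s₁ - γ • s₂ := by
    rw [hXD, smul_add, smul_add, smul_smul, smul_smul, hγβ]
    abel
  rw [hfinal]
  exact sub_mem (add_mem (Submodule.smul_mem _ _ hmemD) hs₁)
    (Submodule.smul_mem _ _ hs₂)
termination_by m - K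
decreasing_by omega

end Aux

/-- In (any algebra satisfying the relations of) the quantum enveloping
algebra of type `Aₙ` with `p₁₁ ≠ -1`, for `1 ≤ K ≤ m < n` the relation
`u_{Km} u_{K,m+1} ≡_{K+1} γ u_{K,m+1} u_{Km}` holds for some nonzero scalar
`γ`, where `u_{Km} = x_K ⋯ x_m` and `≡_{K+1}` is equality modulo the span of
words beginning with a letter `x_j`, `K+1 ≤ j ≤ n`. -/
theorem stmt_11 {k : Type*} [Field k] {A : Type*} [Ring A] [Algebra k A]
    (n : ℕ) (x : ℕ → A) (p : ℕ → ℕ → kˣ)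
    (hne : ((p 1 1 : kˣ) : k) ≠ -1)
    (hdiag : ∀ i, 1 ≤ i → i ≤ n → p i i = p 1 1)
    (hadj : ∀ i, 1 ≤ i → i + 1 ≤ n → p i (i + 1) * p (i + 1) i = (p 1 1)⁻¹)
    (hdist : ∀ i j, 1 ≤ j → j + 1 < i → i ≤ n → p i j * p j i = 1)
    (hcomm : ∀ i j, 1 ≤ j → j + 1 < i → i ≤ n →
      x i * x j = ((p i j : kˣ) : k) • (x j * x i))
    (hserre1 : ∀ i, 1 ≤ i → i + 1 ≤ n →
      x i * x (i + 1) ^ 2 =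
        (((p i (i + 1) : kˣ) : k) * (1 + ((p (i + 1) (i + 1) : kˣ) : k))) •
            (x (i + 1) * x i * x (i + 1))
          - (((p i (i + 1) : kˣ) : k) ^ 2 * ((p (i + 1) (i + 1) : kˣ) : k)) •
            (x (i + 1) ^ 2 * x i))
    (hserre2 : ∀ i, 1 ≤ i → i + 1 ≤ n →
      x i ^ 2 * x (i + 1) =
        (((p i (i + 1) : kˣ) : k) * (1 + ((p i i : kˣ) : k))) •
            (x i * x (i + 1) * x i)
          - (((p i (i + 1) : kˣ) : k) ^ 2 * ((p i i : kˣ) : k)) •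
            (x (i + 1) * x i ^ 2))
    (K m : ℕ) (hK : 1 ≤ K) (hKm : K ≤ m) (hm : m < n) :
    ∃ γ : k, γ ≠ 0 ∧
      ((List.range' K (m + 1 - K)).map x).prod *
          ((List.range' K (m + 2 - K)).map x).prod
        - γ • (((List.range' K (m + 2 - K)).map x).prod *
            ((List.range' K (m + 1 - K)).map x).prod) ∈
        Submodule.span k {a : A | ∃ j, K + 1 ≤ j ∧ j ≤ n ∧
          ∃ l : List ℕ, (∀ t ∈ l, 1 ≤ t ∧ t ≤ n) ∧ a = x j * (l.map x).prod} := by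
  have h := aux n x p hne hdiag hcomm hserre2 K m hK hKm hm
  simpa only [Sset] using h
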